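/- Let L/K be a finite extension of number fields. For every Witt vector ξ ∈ W_{O_K}(O_L), every ideal a ∈ I_K, every prime p ∈ P_K, and every prime P of O_L lying over p with inertia degree f = f(P|p), one has the congruence ξ_{p^f·a} ≡ ξ_a (mod P^{1+⌊v_p(a)/f⌋}), i.e. ξ_{p^f·a} − ξ_a ∈ P^{1+⌊v_p(a)/f⌋}. -/

import Mathlib

open NumberField

set_option synthInstance.maxHeartbeats 1000000
set_option maxHeartbeats 1000000
set_option linter.unusedSectionVars false

noncomputable section

/-- The multiplicative monoid `I_K` of nonzero ideals of the ring of integers of `K`. -/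
def IdealMonoid (K : Type) [Field K] [NumberField K] : Submonoid (Ideal (𝓞 K)) where
  carrier := {I | I ≠ ⊥}
  mul_mem' := by
    intro a b ha hb h
    rcases Ideal.mul_eq_bot.mp h with h' | h'
    · exact ha h'
    · exact hb h'
  one_mem' := by
    simp only [Set.mem_setOf_eq, Ideal.one_eq_top]
    exact top_ne_bot

/-- `I_K`, the monoid of nonzero ideals, as a type. -/
abbrev IK (K : Type) [Field K] [NumberField K] := ↥(IdealMonoid K)

/-- `P_K`, the set of nonzero prime ideals of `𝓞 K`, as a type. -/
def PrimeIdeal (K : Type) [Field K] [NumberField K] :=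
  {p : Ideal (𝓞 K) // p.IsPrime ∧ p ≠ ⊥}

/-- A nonzero prime ideal, regarded as an element of `I_K`. -/
def PrimeIdeal.toIK {K : Type} [Field K] [NumberField K] (p : PrimeIdeal K) : IK K :=
  ⟨p.1, p.2.2⟩

/-- `#k_p`: the cardinality of the residue ring `R ⧸ p`. -/
def residueCard {R : Type} [CommRing R] (p : Ideal R) : ℕ :=
  Nat.card (R ⧸ p)

/-- The shift operator `ψ_a` on `A^{I_K}`: `(ψ_a ξ)_b = ξ_{a·b}`. -/
def shift {K : Type} [Field K] [NumberField K] {A : Type} (a : IK K)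
    (ξ : IK K → A) : IK K → A :=
  fun b => ξ (a * b)

/-- For an ideal `p` of `𝓞 K` and a subset `S ⊆ A^{I_K}`, the set `p·S` of all finite
sums of products of elements of `p` with elements of (the module generated by) `S`. -/
def idealMulSet {K : Type} [Field K] [NumberField K] {A : Type} [CommRing A]
    [Algebra (𝓞 K) A] (p : Ideal (𝓞 K)) (S : Set (IK K → A)) : Set (IK K → A) :=
  ↑(p • Submodule.span (𝓞 K) S)

/-- The descending chain `U_n(A)` of subsets of `A^{I_K}`. -/
def UnSet (K : Type) [Field K] [NumberField K] (A : Type) [CommRing A]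
    [Algebra (𝓞 K) A] : ℕ → Set (IK K → A)
  | 0 => Set.univ
  | n + 1 => {ξ | ξ ∈ UnSet K A n ∧ ∀ p : PrimeIdeal K,
      shift p.toIK ξ - ξ ^ residueCard p.1 ∈ idealMulSet p.1 (UnSet K A n)}

/-- The ring of Witt vectors `W_{O_K}(A) = ⋂ₙ U_n(A)`, as a subset of `A^{I_K}`. -/
def WittSet (K : Type) [Field K] [NumberField K] (A : Type) [CommRing A]
    [Algebra (𝓞 K) A] : Set (IK K → A) :=
  ⋂ n, UnSet K A n

/-- A deterministic finite automaton with output, over input alphabet `Δ` and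
output alphabet `O`. -/
structure DFAO (Δ O : Type) : Type 1 where
  State : Type
  [finState : Finite State]
  trans : State → Δ → State
  start : State
  out : State → O

/-- The output of a DFAO on an input word, processing letters from left to right. -/
def DFAO.output {Δ O : Type} (M : DFAO Δ O) (l : List Δ) : O :=
  M.out (l.foldl M.trans M.start)

/-- `ξ ∈ A^{I_K}` is automatic if some DFAO with input alphabet `P_K` and output
alphabet `A` produces `ξ_a` from every word of primes whose product is `a`. -/
def IsAutomatic {K : Type} [Field K] [NumberField K] {A : Type}
    (ξ : IK K → A) : Prop :=
  ∃ M : DFAO (PrimeIdeal K) A, ∀ (l : List (PrimeIdeal K)) (a : IK K),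
    (a : Ideal (𝓞 K)) = (l.map Subtype.val).prod → ξ a = M.output l

/-- `v_p(a)`: the largest `e` such that `p^e` divides `a`. -/
def vIdeal {R : Type} [CommRing R] (p a : Ideal R) : ℕ :=
  sSup {e : ℕ | p ^ e ∣ a}

section VIdealAux

variable {R : Type} [CommRing R] [IsDomain R] [IsDedekindDomain R]

lemma vIdeal_bddAbove {p a : Ideal R} (hp : Prime p) (ha : a ≠ ⊥) :
    BddAbove {e : ℕ | p ^ e ∣ a} := by
  obtain ⟨N, hN⟩ := FiniteMultiplicity.of_prime_left hp ha
  refine ⟨N, fun e he => ?_⟩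
  by_contra h
  exact hN (dvd_trans (pow_dvd_pow p (by omega)) he)

lemma vIdeal_spec {p a : Ideal R} (hp : Prime p) (ha : a ≠ ⊥) :
    p ^ vIdeal p a ∣ a :=
  Nat.sSup_mem ⟨0, by simp⟩ (vIdeal_bddAbove hp ha)

lemma le_vIdeal {p a : Ideal R} (hp : Prime p) (ha : a ≠ ⊥) {e : ℕ}
    (he : p ^ e ∣ a) : e ≤ vIdeal p a :=
  le_csSup (vIdeal_bddAbove hp ha) he

lemma vIdeal_eq_zero {p a : Ideal R} (h : ¬ p ∣ a) : vIdeal p a = 0 := by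
  refine Nat.le_zero.mp (csSup_le ⟨0, by simp⟩ fun e he => ?_)
  cases e with
  | zero => exact le_rfl
  | succ e => exact absurd (dvd_trans (dvd_pow_self p e.succ_ne_zero) he) h

lemma vIdeal_mul_self {p a : Ideal R} (hp : Prime p) (ha : a ≠ ⊥) :
    vIdeal p (p * a) = vIdeal p a + 1 := by
  have hpa : p * a ≠ ⊥ := mul_ne_zero hp.ne_zero ha
  apply le_antisymm
  · refine csSup_le ⟨0, by simp⟩ fun e he => ?_
    cases e with
    | zero => omega
    | succ e =>
      have he' : p ^ e ∣ a := by
        simp only [Set.mem_setOf_eq, pow_succ'] at he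
        exact (mul_dvd_mul_iff_left hp.ne_zero).mp he
      have := le_vIdeal hp ha he'
      omega
  · refine le_vIdeal hp hpa ?_
    rw [pow_succ']
    exact mul_dvd_mul_left p (vIdeal_spec hp ha)

lemma nat_div_succ_le {w f : ℕ} : (w + 1) / f ≤ w / f + 1 := by
  rcases Nat.eq_zero_or_pos f with hf | hf
  · simp [hf]
  · calc (w + 1) / f ≤ (w + f) / f := Nat.div_le_div_right (by omega)
      _ = w / f + 1 := Nat.add_div_right w hf

end VIdealAux

section MainAux

variable {K : Type} [Field K] [NumberField K] {L : Type} [Field L] [NumberField L]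
  [Algebra K L] [FiniteDimensional K L]

/-- Evaluation-difference as an `𝓞 K`-linear map. -/
def evalSub (c d : IK K) : (IK K → 𝓞 L) →ₗ[𝓞 K] 𝓞 L where
  toFun ξ := ξ c - ξ d
  map_add' x y := by
    simp only [Pi.add_apply]
    ring
  map_smul' r x := by
    simp only [Pi.smul_apply, smul_sub, RingHom.id_apply]

@[simp] lemma evalSub_apply (c d : IK K) (ξ : IK K → 𝓞 L) :
    evalSub c d ξ = ξ c - ξ d := rfl

/-- Componentwise control on elements of `p·S`. -/
lemma comp_mem {p : Ideal (𝓞 K)} {S : Set (IK K → 𝓞 L)} {δ : IK K → 𝓞 L}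
    (hδ : δ ∈ idealMulSet p S) (φ : (IK K → 𝓞 L) →ₗ[𝓞 K] 𝓞 L)
    {P M : Ideal (𝓞 L)} (hmap : ∀ c ∈ p, algebraMap (𝓞 K) (𝓞 L) c ∈ P)
    (hS : ∀ η ∈ S, φ η ∈ M) : φ δ ∈ P * M := by
  have h1 : δ ∈ p • Submodule.span (𝓞 K) S := hδ
  have h2 : φ δ ∈ Submodule.map φ (p • Submodule.span (𝓞 K) S) :=
    Submodule.mem_map_of_mem h1
  rw [Submodule.map_smul''] at h2
  have h3 : Submodule.map φ (Submodule.span (𝓞 K) S) ≤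
      (M.restrictScalars (𝓞 K) : Submodule (𝓞 K) (𝓞 L)) := by
    rw [Submodule.map_span]
    refine Submodule.span_le.mpr ?_
    rintro _ ⟨η, hη, rfl⟩
    exact hS η hη
  have h4 : p • (M.restrictScalars (𝓞 K) : Submodule (𝓞 K) (𝓞 L)) ≤
      (P * M).restrictScalars (𝓞 K) := by
    refine Submodule.smul_le.mpr fun c hc x hx => ?_
    have : (c • x : 𝓞 L) = algebraMap (𝓞 K) (𝓞 L) c * x := Algebra.smul_def c x
    rw [Submodule.restrictScalars_mem, this]
    exact Ideal.mul_mem_mul (hmap c hc) hx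
  exact h4 (Submodule.smul_mono le_rfl h3 h2)

lemma pow_sub_pow_mem_simple {P : Ideal (𝓞 L)} {x y : 𝓞 L} (h : x - y ∈ P) (t : ℕ) :
    x ^ t - y ^ t ∈ P := by
  have hxy : Ideal.Quotient.mk P x = Ideal.Quotient.mk P y := Ideal.Quotient.eq.mpr h
  exact Ideal.Quotient.eq.mp (by rw [map_pow, map_pow, hxy])

lemma pow_sub_pow_mem {P : Ideal (𝓞 L)} {x y : 𝓞 L} {j q : ℕ}
    (hq : ((q : ℕ) : 𝓞 L) ∈ P) (hxy1 : x - y ∈ P) (hxyj : x - y ∈ P ^ j) :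
    x ^ q - y ^ q ∈ P ^ (j + 1) := by
  rw [← geom_sum₂_mul, pow_succ']
  refine Ideal.mul_mem_mul ?_ hxyj
  have hxy : Ideal.Quotient.mk P x = Ideal.Quotient.mk P y := Ideal.Quotient.eq.mpr hxy1
  refine Ideal.Quotient.eq_zero_iff_mem.mp ?_
  rw [map_sum]
  have : ∀ i ∈ Finset.range q,
      Ideal.Quotient.mk P (x ^ i * y ^ (q - 1 - i)) = Ideal.Quotient.mk P y ^ (q - 1) := by
    intro i hi
    rw [Finset.mem_range] at hi
    rw [map_mul, map_pow, map_pow, hxy, ← pow_add]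
    congr 1
    omega
  rw [Finset.sum_congr rfl this, Finset.sum_const, Finset.card_range, nsmul_eq_mul]
  have hq0 : ((q : ℕ) : 𝓞 L ⧸ P) = 0 := by
    rw [← map_natCast (Ideal.Quotient.mk P), Ideal.Quotient.eq_zero_iff_mem]
    exact hq
  rw [hq0, zero_mul]

lemma natCast_residueCard_mem (p : PrimeIdeal K) {P : Ideal (𝓞 L)}
    (hover : Ideal.comap (algebraMap (𝓞 K) (𝓞 L)) P = p.1) :
    ((residueCard p.1 : ℕ) : 𝓞 L) ∈ P := by
  letI : Fintype (𝓞 K ⧸ p.1) := @Fintype.ofFinite _ (Ideal.finiteQuotientOfFreeOfNeBot p.1 p.2.2)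
  have h1 : ((residueCard p.1 : ℕ) : 𝓞 K) ∈ Ideal.comap (algebraMap (𝓞 K) (𝓞 L)) P := by
    rw [hover]
    have h0 : ((residueCard p.1 : ℕ) : 𝓞 K ⧸ p.1) = 0 := by
      rw [residueCard, Nat.card_eq_fintype_card]
      exact Nat.cast_card_eq_zero _
    rwa [← map_natCast (Ideal.Quotient.mk p.1), Ideal.Quotient.eq_zero_iff_mem] at h0
  have h2 := Ideal.mem_comap.mp h1
  rwa [map_natCast] at h2

lemma frob_mem (p : PrimeIdeal K) {P : Ideal (𝓞 L)} (hP : P.IsPrime)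
    (hover : Ideal.comap (algebraMap (𝓞 K) (𝓞 L)) P = p.1) (z : 𝓞 L) :
    z ^ residueCard p.1 ^ Ideal.inertiaDeg' p.1 P - z ∈ P := by
  have hPbot : P ≠ ⊥ := by
    rintro rfl
    apply p.2.2
    rw [← hover]
    exact (Ideal.comap_bot_of_injective _ (RingOfIntegers.algebraMap.injective K L))
  haveI : P.IsMaximal := Ideal.IsPrime.isMaximal hP hPbot
  haveI : p.1.IsMaximal := Ideal.IsPrime.isMaximal p.2.1 p.2.2
  haveI : P.LiesOver p.1 := ⟨hover.symm⟩
  letI : Field (𝓞 L ⧸ P) := Ideal.Quotient.field P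
  letI : Field (𝓞 K ⧸ p.1) := Ideal.Quotient.field p.1
  letI : Fintype (𝓞 L ⧸ P) := @Fintype.ofFinite _ (Ideal.finiteQuotientOfFreeOfNeBot P hPbot)
  letI : Fintype (𝓞 K ⧸ p.1) := @Fintype.ofFinite _ (Ideal.finiteQuotientOfFreeOfNeBot p.1 p.2.2)
  have hf : Ideal.inertiaDeg' p.1 P =
      Module.finrank (𝓞 K ⧸ p.1) (𝓞 L ⧸ P) := Ideal.inertiaDeg'_algebraMap p.1 P
  have hcard : Fintype.card (𝓞 L ⧸ P) =
      Fintype.card (𝓞 K ⧸ p.1) ^ Module.finrank (𝓞 K ⧸ p.1) (𝓞 L ⧸ P) :=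
    Module.card_eq_pow_finrank (K := 𝓞 K ⧸ p.1) (V := 𝓞 L ⧸ P)
  have hq : residueCard p.1 = Fintype.card (𝓞 K ⧸ p.1) := Nat.card_eq_fintype_card
  refine Ideal.Quotient.eq_zero_iff_mem.mp ?_
  rw [map_sub, map_pow, hq, hf, ← hcard, FiniteField.pow_card, sub_self]

/-- The key congruence, proved by induction on `n` along the chain `U_n`. -/
lemma unset_congruence (p : PrimeIdeal K) (P : Ideal (𝓞 L)) (hP : P.IsPrime)
    (hover : Ideal.comap (algebraMap (𝓞 K) (𝓞 L)) P = p.1) (n : ℕ) :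
    ∀ ξ ∈ UnSet K (𝓞 L) n, ∀ a : IK K,
      ξ (p.toIK ^ (Ideal.inertiaDeg' p.1 P) * a) - ξ a ∈
        P ^ min n (1 + vIdeal p.1 (a : Ideal (𝓞 K)) /
          (Ideal.inertiaDeg' p.1 P)) := by
  set f := Ideal.inertiaDeg' p.1 P with hfdef
  set q := residueCard p.1 with hqdef
  have hprime : Prime p.1 := Ideal.prime_of_isPrime p.2.2 p.2.1
  have hmap : ∀ c ∈ p.1, algebraMap (𝓞 K) (𝓞 L) c ∈ P := fun c hc =>
    Ideal.mem_comap.mp (by rw [hover]; exact hc)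
  have hqP : ((q : ℕ) : 𝓞 L) ∈ P := natCast_residueCard_mem p hover
  induction n with
  | zero =>
    intro ξ _ a
    simp [Ideal.one_eq_top]
  | succ n IH =>
    intro ξ hξ
    obtain ⟨h1, h2⟩ := hξ
    have hδ := h2 p
    have hstep : ∀ c : IK K, ξ (p.toIK * c) - (ξ c) ^ q ∈ P := by
      intro c
      have h := comp_mem hδ (LinearMap.proj c) hmap (M := (⊤ : Ideal (𝓞 L)))
        (fun η _ => Submodule.mem_top)
      rw [Ideal.mul_top] at h
      simpa only [LinearMap.proj_apply, Function.eval, Pi.sub_apply, Pi.pow_apply, shift] using h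
    have hbase : ∀ c : IK K, ξ (p.toIK ^ f * c) - ξ c ∈ P := by
      have hiter : ∀ (j : ℕ) (c : IK K), ξ (p.toIK ^ j * c) - (ξ c) ^ q ^ j ∈ P := by
        intro j
        induction j with
        | zero => intro c; simp
        | succ j IHj =>
          intro c
          have e1 : p.toIK ^ (j + 1) * c = p.toIK ^ j * (p.toIK * c) := by
            rw [pow_succ, mul_assoc]
          have t1 := IHj (p.toIK * c)
          have t2 : ξ (p.toIK * c) ^ q ^ j - (ξ c) ^ q ^ (j + 1) ∈ P := by
            have := pow_sub_pow_mem_simple (hstep c) (q ^ j)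
            rwa [← pow_mul, mul_comm q (q ^ j), ← pow_succ] at this
          have h := add_mem t1 t2
          rw [sub_add_sub_cancel] at h
          rwa [e1]
      intro c
      have h3 := hiter f c
      have h4 := frob_mem p hP hover (ξ c)
      have h := add_mem h3 h4
      rwa [sub_add_sub_cancel] at h
    suffices H : ∀ m : ℕ, ∀ a : IK K, vIdeal p.1 (a : Ideal (𝓞 K)) ≤ m →
        ξ (p.toIK ^ f * a) - ξ a ∈
          P ^ min (n + 1) (1 + vIdeal p.1 (a : Ideal (𝓞 K)) / f) by
      exact fun a => H _ a le_rfl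
    intro m
    induction m with
    | zero =>
      intro a ha0
      have hv : vIdeal p.1 (a : Ideal (𝓞 K)) = 0 := Nat.le_zero.mp ha0
      rw [hv]
      have hmin : min (n + 1) (1 + 0 / f) = 1 := by
        rw [Nat.zero_div]
        exact min_eq_right (by omega)
      rw [hmin, pow_one]
      exact hbase a
    | succ m IHm =>
      intro a ham
      by_cases hdvd : p.1 ∣ (a : Ideal (𝓞 K))
      · obtain ⟨b0, hb0⟩ := hdvd
        have hb0ne : b0 ≠ ⊥ := by
          intro h
          exact a.2 (by rw [show (a : Ideal (𝓞 K)) = p.1 * b0 from hb0, h]; simp)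
        set b : IK K := ⟨b0, hb0ne⟩ with hbdef
        have hab : a = p.toIK * b := Subtype.ext hb0
        have hb : (a : Ideal (𝓞 K)) = p.1 * ((b : IK K) : Ideal (𝓞 K)) := hb0
        have hva : vIdeal p.1 (a : Ideal (𝓞 K)) =
            vIdeal p.1 ((b : IK K) : Ideal (𝓞 K)) + 1 := by
          rw [hb]
          exact vIdeal_mul_self hprime hb0ne
        have hvb : vIdeal p.1 ((b : IK K) : Ideal (𝓞 K)) ≤ m := by
          rw [hva] at ham
          omega
        -- difference of the δ-components
        have hδdiff : (ξ (p.toIK * (p.toIK ^ f * b)) - (ξ (p.toIK ^ f * b)) ^ q) -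
            (ξ (p.toIK * b) - (ξ b) ^ q) ∈
            P * P ^ min n (1 + vIdeal p.1 ((b : IK K) : Ideal (𝓞 K)) / f) := by
          have h := comp_mem hδ (evalSub (p.toIK ^ f * b) b) hmap
            (M := P ^ min n (1 + vIdeal p.1 ((b : IK K) : Ideal (𝓞 K)) / f))
            (fun η hη => by simpa only [evalSub_apply] using IH η hη b)
          simpa only [evalSub_apply, Pi.sub_apply, Pi.pow_apply, shift] using h
        have hstep2 : ξ (p.toIK ^ f * b) - ξ b ∈
            P ^ min (n + 1) (1 + vIdeal p.1 ((b : IK K) : Ideal (𝓞 K)) / f) := IHm b hvb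
        have hj1 : 1 ≤ min (n + 1) (1 + vIdeal p.1 ((b : IK K) : Ideal (𝓞 K)) / f) :=
          le_min (Nat.succ_le_succ (Nat.zero_le n)) (Nat.le_add_right 1 _)
        have hpow : (ξ (p.toIK ^ f * b)) ^ q - (ξ b) ^ q ∈
            P ^ (min (n + 1) (1 + vIdeal p.1 ((b : IK K) : Ideal (𝓞 K)) / f) + 1) :=
          pow_sub_pow_mem hqP
            (Ideal.pow_le_self (Nat.one_le_iff_ne_zero.mp hj1) hstep2) hstep2
        have hdiv : (vIdeal p.1 ((b : IK K) : Ideal (𝓞 K)) + 1) / f ≤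
            vIdeal p.1 ((b : IK K) : Ideal (𝓞 K)) / f + 1 := nat_div_succ_le
        have harith1 : min (n + 1) (1 + (vIdeal p.1 ((b : IK K) : Ideal (𝓞 K)) + 1) / f) ≤
            min n (1 + vIdeal p.1 ((b : IK K) : Ideal (𝓞 K)) / f) + 1 := by
          rw [← min_add_add_right]
          refine min_le_min le_rfl ?_
          rw [Nat.add_assoc]
          exact Nat.add_le_add_left hdiv 1
        have harith2 : min (n + 1) (1 + (vIdeal p.1 ((b : IK K) : Ideal (𝓞 K)) + 1) / f) ≤
            min (n + 1) (1 + vIdeal p.1 ((b : IK K) : Ideal (𝓞 K)) / f) + 1 := by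
          rw [← min_add_add_right]
          refine min_le_min (Nat.le_succ _) ?_
          rw [Nat.add_assoc]
          exact Nat.add_le_add_left hdiv 1
        have hle1 : P * P ^ min n (1 + vIdeal p.1 ((b : IK K) : Ideal (𝓞 K)) / f) ≤
            P ^ min (n + 1) (1 + (vIdeal p.1 ((b : IK K) : Ideal (𝓞 K)) + 1) / f) := by
          rw [← pow_succ']
          exact Ideal.pow_le_pow_right harith1
        have hle2 : P ^ (min (n + 1) (1 + vIdeal p.1 ((b : IK K) : Ideal (𝓞 K)) / f) + 1) ≤
            P ^ min (n + 1) (1 + (vIdeal p.1 ((b : IK K) : Ideal (𝓞 K)) + 1) / f) :=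
          Ideal.pow_le_pow_right harith2
        rw [hva, hab]
        have e2 : p.toIK ^ f * (p.toIK * b) = p.toIK * (p.toIK ^ f * b) := mul_left_comm _ _ _
        rw [e2]
        have e3 : ξ (p.toIK * (p.toIK ^ f * b)) - ξ (p.toIK * b) =
            ((ξ (p.toIK * (p.toIK ^ f * b)) - (ξ (p.toIK ^ f * b)) ^ q) -
              (ξ (p.toIK * b) - (ξ b) ^ q)) +
            ((ξ (p.toIK ^ f * b)) ^ q - (ξ b) ^ q) := by ring
        rw [e3]
        exact add_mem (hle1 hδdiff) (hle2 hpow)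
      · have hv : vIdeal p.1 (a : Ideal (𝓞 K)) = 0 := vIdeal_eq_zero hdvd
        rw [hv]
        have hmin : min (n + 1) (1 + 0 / f) = 1 := by
          rw [Nat.zero_div]
          exact min_eq_right (by omega)
        rw [hmin, pow_one]
        exact hbase a

end MainAux

/-- for a finite extension `L/K` of number fields, a Witt vector
`ξ ∈ W_{O_K}(O_L)`, an ideal `a ∈ I_K`, a prime `p ∈ P_K`, and a prime `P` of `O_L`
lying over `p` with inertia degree `f`, one has
`ξ_{p^f·a} ≡ ξ_a (mod P^{1+⌊v_p(a)/f⌋})`. -/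
theorem witt_coefficient_congruence (K : Type) [Field K] [NumberField K]
    (L : Type) [Field L] [NumberField L] [Algebra K L] [FiniteDimensional K L]
    (ξ : IK K → 𝓞 L) (hξ : ξ ∈ WittSet K (𝓞 L))
    (a : IK K) (p : PrimeIdeal K)
    (P : Ideal (𝓞 L)) (hP : P.IsPrime)
    (hover : Ideal.comap (algebraMap (𝓞 K) (𝓞 L)) P = p.1) :
    ξ (p.toIK ^ (Ideal.inertiaDeg' p.1 P) * a) - ξ a ∈
      P ^ (1 + vIdeal p.1 (a : Ideal (𝓞 K)) /
        (Ideal.inertiaDeg' p.1 P)) := by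
  set f := Ideal.inertiaDeg' p.1 P with hfdef
  set n := 1 + vIdeal p.1 (a : Ideal (𝓞 K)) / f with hndef
  have hξn : ξ ∈ UnSet K (𝓞 L) n := Set.mem_iInter.mp hξ n
  have h := unset_congruence p P hP hover n ξ hξn a
  rwa [min_self] at h

end
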